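/- The dual higher spin weights w* satisfy the reflection relation w*_{u;s}(i,j;k,l) = [(s-u)/(s(1-us))] · w_{1/u;s}(i, 1-j; k, 1-l) for all i,k ∈ ℤ_{≥0} and j,l ∈ {0,1}. -/

import Mathlib

/-- Higher spin vertex weights `w_{u;s}(i,j;k,l)`: bottom `i`, left `j`, top `k`,
right `l`; zero unless `i + j = k + l` with `j,l ∈ {0,1}`. -/
noncomputable def whs (q u s : ℂ) (i j k l : ℕ) : ℂ :=
  if j = 0 ∧ l = 0 ∧ k = i then (1 - s * u * q ^ i) / (1 - s * u)
  else if j = 0 ∧ l = 1 ∧ k + 1 = i then (q ^ i - 1) * s * u / (1 - s * u)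
  else if j = 1 ∧ l = 0 ∧ k = i + 1 then (1 - s ^ 2 * q ^ i) / (1 - s * u)
  else if j = 1 ∧ l = 1 ∧ k = i then (s ^ 2 * q ^ i - s * u) / (1 - s * u)
  else 0

/-- Dual higher spin vertex weights `w*_{u;s}`: bottom `i`, left `j`, top `k`,
right `l`; zero unless `i + l = k + j` with `j,l ∈ {0,1}`. -/
noncomputable def whsDual (q u s : ℂ) (i j k l : ℕ) : ℂ :=
  if j = 0 ∧ l = 0 ∧ k = i then (1 - s * u * q ^ i) / (1 - s * u)
  else if j = 0 ∧ l = 1 ∧ k = i + 1 then (-(s⁻¹ * u) * (1 - s ^ 2 * q ^ i)) / (1 - s * u)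
  else if j = 1 ∧ l = 0 ∧ k + 1 = i then (1 - q ^ i) / (1 - s * u)
  else if j = 1 ∧ l = 1 ∧ k = i then (q ^ i - s⁻¹ * u) / (1 - s * u)
  else 0

/-- Reflection relation between dual and ordinary higher spin weights:
`w*_{u;s}(i,j;k,l) = (s-u)/(s(1-us)) · w_{1/u;s}(i,1-j;k,1-l)`. -/
theorem stmt5 (q u s : ℂ) (hs : s ≠ 0) (hu : u ≠ 0) (h1 : u * s ≠ 1) (h2 : u ≠ s)
    (i k : ℕ) (j l : ℕ) (hj : j ≤ 1) (hl : l ≤ 1) :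
    whsDual q u s i j k l
      = (s - u) / (s * (1 - u * s)) * whs q u⁻¹ s i (1 - j) k (1 - l) := by
  have hsu : (1 : ℂ) - s * u ≠ 0 := fun h => h1 (by linear_combination -h)
  have hsu2 : (1 : ℂ) - u * s ≠ 0 := fun h => h1 (by linear_combination -h)
  have hus : u - s ≠ 0 := sub_ne_zero.mpr h2
  have hinv : (1 : ℂ) - s * u⁻¹ = (u - s) / u := by field_simp
  interval_cases j <;> interval_cases l <;>
    simp only [whs, whsDual, hinv] <;> norm_num
  · by_cases hk : k = i
    · simp only [hk, if_pos rfl, if_true]; field_simp; ring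
    · simp [hk]
  · by_cases hk : k = i + 1
    · simp only [hk, if_pos rfl, if_true]; field_simp; ring
    · simp [hk]
  · by_cases hk : k + 1 = i
    · simp only [hk, if_pos rfl, if_true]; field_simp; ring
    · simp [hk]
  · by_cases hk : k = i
    · simp only [hk, if_pos rfl, if_true]; field_simp; ring
    · simp [hk]
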